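/- If f : Γ → Λ is an active combinatorial graph map between connected graphs, then b₁(Γ) = b₁(Λ) + Σ_{w ∈ V_Λ} b₁(f⁻¹(w)), where b₁ of a connected graph is its number of edges minus its number of vertices plus one, and b₁ of a fiber is computed with one summand per connected component (with b₁ of the empty graph equal to 0). -/

import Mathlib

open Classical in
lemma card_compl_pair {α : Type} [Fintype α] (a b : α) (h : a ≠ b) :
    Fintype.card {x : α // x ≠ a ∧ x ≠ b} = Fintype.card α - 2 := by
  classical
  have h1 : Fintype.card {x : α // ¬(x = a ∨ x = b)} = Fintype.card α - Fintype.card {x : α // x = a ∨ x = b} :=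
    Fintype.card_subtype_compl _
  have h2 : Fintype.card {x : α // x = a ∨ x = b} = 2 := by
    rw [Fintype.card_subtype]
    have : (Finset.univ.filter fun x => x = a ∨ x = b) = {a, b} := by
      ext x; simp
    rw [this, Finset.card_pair h]
  have h3 : Fintype.card {x : α // x ≠ a ∧ x ≠ b} = Fintype.card {x : α // ¬(x = a ∨ x = b)} := by
    apply Fintype.card_congr
    exact Equiv.subtypeEquivRight (by intro x; push_neg; rfl)
  rw [h3, h1, h2]

lemma even_card_of_invol : ∀ (n : ℕ) (α : Type) (_ : Fintype α), Fintype.card α = n →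
    ∀ (f : α → α), (∀ x, f (f x) = x) → (∀ x, f x ≠ x) → 2 ∣ n := by
  intro n
  induction n using Nat.strong_induction_on with
  | _ n ih =>
    intro α inst hcard f hff hne
    classical
    rcases isEmpty_or_nonempty α with hα | hα
    · simp only [Fintype.card_eq_zero] at hcard; omega
    · obtain ⟨a⟩ := hα
      set β := {x : α // x ≠ a ∧ x ≠ f a} with hβ
      have hfa : f a ≠ a := hne a
      have hcardβ : Fintype.card β = n - 2 := by
        rw [card_compl_pair a (f a) (Ne.symm hfa), hcard]
      have hn2 : 2 ≤ n := by
        rw [← hcard]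
        have : ({a, f a} : Finset α).card ≤ Fintype.card α := Finset.card_le_univ _
        rwa [Finset.card_pair (Ne.symm hfa)] at this
      have hdvd : 2 ∣ (n - 2) := by
        refine ih (n-2) (by omega) β _ hcardβ
          (fun x => ⟨f x.1, ?_, ?_⟩) (fun x => Subtype.ext (hff x.1))
          (fun x hx => hne x.1 (congrArg Subtype.val hx))
        · intro hxa; apply x.2.2
          have := congrArg f hxa; rwa [hff] at this
        · intro hxa; apply x.2.1
          have := congrArg f hxa; rwa [hff, hff] at this
      omega

section QuotPair

variable {α : Type} (r : α → α → Prop) (u v : α)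

/-- Adding one pair to a relation. -/
def pairRel (x y : α) : Prop := r x y ∨ (x = u ∧ y = v)

lemma eqvGen_pairRel_cases {x y : α} (h : Relation.EqvGen (pairRel r u v) x y) :
    Relation.EqvGen r x y ∨
      (Relation.EqvGen r x u ∧ Relation.EqvGen r v y) ∨
      (Relation.EqvGen r x v ∧ Relation.EqvGen r u y) := by
  have tr : ∀ {a b c : α}, Relation.EqvGen r a b → Relation.EqvGen r b c → Relation.EqvGen r a c :=
    fun h h' => Relation.EqvGen.trans _ _ _ h h'
  have sy : ∀ {a b : α}, Relation.EqvGen r a b → Relation.EqvGen r b a :=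
    fun h => Relation.EqvGen.symm _ _ h
  induction h with
  | rel x y hxy =>
    rcases hxy with h | ⟨rfl, rfl⟩
    · exact Or.inl (Relation.EqvGen.rel _ _ h)
    · exact Or.inr (Or.inl ⟨Relation.EqvGen.refl _, Relation.EqvGen.refl _⟩)
  | refl x => exact Or.inl (Relation.EqvGen.refl _)
  | symm x y _ ih =>
    rcases ih with h | ⟨h1, h2⟩ | ⟨h1, h2⟩
    · exact Or.inl (sy h)
    · exact Or.inr (Or.inr ⟨sy h2, sy h1⟩)
    · exact Or.inr (Or.inl ⟨sy h2, sy h1⟩)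
  | trans x y z _ _ ih1 ih2 =>
    rcases ih1 with h | ⟨h1, h2⟩ | ⟨h1, h2⟩ <;>
      rcases ih2 with h' | ⟨h1', h2'⟩ | ⟨h1', h2'⟩
    · exact Or.inl (tr h h')
    · exact Or.inr (Or.inl ⟨tr h h1', h2'⟩)
    · exact Or.inr (Or.inr ⟨tr h h1', h2'⟩)
    · exact Or.inr (Or.inl ⟨h1, tr h2 h'⟩)
    · exact Or.inr (Or.inl ⟨h1, h2'⟩)
    · exact Or.inl (tr h1 h2')
    · exact Or.inr (Or.inr ⟨h1, tr h2 h'⟩)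
    · exact Or.inl (tr h1 h2')
    · exact Or.inr (Or.inr ⟨h1, h2'⟩)

lemma quot_card_le_pairRel [Finite α] :
    Nat.card (Quot r) ≤ Nat.card (Quot (pairRel r u v)) + 1 := by
  classical
  have finq : Fintype (Quot (pairRel r u v)) := Fintype.ofFinite _
  have key : Nat.card (Quot r) ≤ Nat.card (Option (Quot (pairRel r u v))) := by
    apply Nat.card_le_card_of_injective
      (Quot.lift (fun x => if Quot.mk r x = Quot.mk r u then (none : Option (Quot (pairRel r u v)))
          else some (Quot.mk _ x)) ?_)
    · intro q1 q2
      induction q1 using Quot.ind with | _ x =>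
      induction q2 using Quot.ind with | _ y =>
      simp only
      split_ifs with h1 h2 h2
      · intro _; rw [h1, h2]
      · simp
      · simp
      · intro h; simp only [Option.some_inj] at h
        have := Quot.eq.mp h
        rcases eqvGen_pairRel_cases r u v this with h' | ⟨ha, _⟩ | ⟨_, hb⟩
        · exact Quot.eqvGen_sound h'
        · exact absurd (Quot.eqvGen_sound ha) h1
        · exact absurd (Quot.eqvGen_sound (Relation.EqvGen.symm _ _ hb)) h2
    · intro x y hxy
      have hq : Quot.mk r x = Quot.mk r y := Quot.sound hxy
      simp only [hq]
      split_ifs with h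
      · rfl
      · exact congrArg some (Quot.sound (Or.inl hxy))
  have hopt : Nat.card (Option (Quot (pairRel r u v))) = Nat.card (Quot (pairRel r u v)) + 1 := by
    simp [Nat.card_eq_fintype_card]
  omega

end QuotPair

/-- A graph: finite sets `V` of vertices and `A` of arcs (half-edges), a fixed-point
free involution `† = dag` on arcs, and an endpoint map `t : A → V ⊔ {∞}`
(we encode `V ⊔ {∞}` as `Option V` with `∞ = none`). -/
structure CGraph : Type 1 where
  V : Type
  A : Type
  [fintypeV : Fintype V]
  [fintypeA : Fintype A]
  dag : A → A
  dag_dag : ∀ a, dag (dag a) = a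
  dag_ne : ∀ a, dag a ≠ a
  t : A → Option V

attribute [instance] CGraph.fintypeV CGraph.fintypeA

namespace CGraph

/-- The generating relation on `V ⊔ A`: an arc touches its `†`-partner, and an arc
touches its endpoint (when the endpoint is a vertex). -/
inductive Touch (G : CGraph) : (G.V ⊕ G.A) → (G.V ⊕ G.A) → Prop
  | dag (a : G.A) : Touch G (Sum.inr a) (Sum.inr (G.dag a))
  | incid (a : G.A) (v : G.V) : G.t a = some v → Touch G (Sum.inr a) (Sum.inl v)

/-- A graph is connected if `V ⊔ A` is nonempty and the equivalence relation generated
by `Touch` has exactly one equivalence class. -/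
def Connected (G : CGraph) : Prop :=
  Nonempty (G.V ⊕ G.A) ∧ ∀ x y : G.V ⊕ G.A, Relation.EqvGen G.Touch x y

/-- The valence of a vertex: the number of arcs ending at it. -/
noncomputable def valence (G : CGraph) (v : G.V) : ℕ :=
  Nat.card {a : G.A // G.t a = some v}

/-- A vertex is bivalent if exactly two arcs end at it. -/
def Bivalent (G : CGraph) (v : G.V) : Prop := G.valence v = 2

/-- `x ∈ V ⊔ {∞}` is bivalent or `∞`. -/
def BivAt (G : CGraph) (x : Option G.V) : Prop :=
  x = none ∨ ∃ v, x = some v ∧ G.Bivalent v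

/-- `IsPath G l s e`: the list of arcs `l = [a₁, …, aₙ]` is a path from `s` to `e`:
`t(a₁†) = s`, `t(aᵢ) = t(aᵢ₊₁†)` for `i < n`, and `t(aₙ) = e`; the empty path is a
path from `s` to `e` exactly when `s = e`. -/
def IsPath (G : CGraph) : List G.A → Option G.V → Option G.V → Prop
  | [], s, e => s = e
  | a :: l, s, e => G.t (G.dag a) = s ∧ G.IsPath l (G.t a) e

/-- A path is bivalent if each of its intermediate vertices `t(aᵢ)`, `i < n`, is
bivalent or `∞`. -/
def IsBivalentPath (G : CGraph) (l : List G.A) (s e : Option G.V) : Prop :=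
  G.IsPath l s e ∧
    ∀ (i : ℕ) (h : i + 1 < l.length), G.BivAt (G.t (l.get ⟨i, Nat.lt_of_succ_lt h⟩))

/-- The underlying data of a combinatorial graph map `Γ → Λ`: a basepoint-preserving
map on vertices-with-∞ and a map on arcs in the opposite direction. -/
structure PreMap (G H : CGraph) : Type where
  fv : Option G.V → Option H.V
  fa : H.A → G.A

/-- `FiberList f a l`: the list `l` enumerates `f_a⁻¹(a)` (without repetitions) and is
a bivalent path in the target graph between the images of the endpoints of `a`
(oriented so that the identity map is a graph map). -/
def FiberList {G H : CGraph} (f : PreMap G H) (a : G.A) (l : List H.A) : Prop :=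
  (∀ b : H.A, b ∈ l ↔ f.fa b = a) ∧ l.Nodup ∧
    H.IsBivalentPath l (f.fv (G.t (G.dag a))) (f.fv (G.t a))

/-- `MidVertexOf H l w`: `w` occurs as an intermediate vertex of the path `l`. -/
def MidVertexOf (H : CGraph) (l : List H.A) (w : H.V) : Prop :=
  ∃ (i : ℕ) (h : i + 1 < l.length), H.t (l.get ⟨i, Nat.lt_of_succ_lt h⟩) = some w

/-- `OnFiberPath f w a`: the vertex `w` of the target occurs as an intermediate vertex
of the bivalent path enumerating `f_a⁻¹(a)`. -/
def OnFiberPath {G H : CGraph} (f : PreMap G H) (w : H.V) (a : G.A) : Prop :=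
  ∃ l : List H.A, FiberList f a l ∧ MidVertexOf H l w

/-- The conditions for a pair `(f_v, f_a)` to be a combinatorial graph map:
(1) `f_v(∞) = ∞`; (2) `f_a` commutes with `†`; (3) each `f_a⁻¹(a)` admits an ordering
making it a bivalent path between the images of the endpoints of `a`; (4) vertices
identified by `f_v` are joined by a path of arcs outside the image of `f_a`;
(5) each vertex of the target not in the image of `f_v` is bivalent and occurs as an
intermediate vertex of exactly one of the bivalent paths from (3) (where the paths of
an arc and of its `†`-partner are regarded as the same path). -/
def IsGraphMap {G H : CGraph} (f : PreMap G H) : Prop :=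
  f.fv none = none ∧
  (∀ b : H.A, f.fa (H.dag b) = G.dag (f.fa b)) ∧
  (∀ a : G.A, ∃ l : List H.A, FiberList f a l) ∧
  (∀ v v' : G.V, f.fv (some v) = f.fv (some v') → f.fv (some v) ≠ none →
    ∃ l : List G.A, (∀ c ∈ l, c ∉ Set.range f.fa) ∧ G.IsPath l (some v) (some v')) ∧
  (∀ w : H.V, (∀ v : G.V, f.fv (some v) ≠ some w) →
    H.Bivalent w ∧ ∃ a : G.A, OnFiberPath f w a ∧
      ∀ a' : G.A, OnFiberPath f w a' → a' = a ∨ a' = G.dag a)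

/-- The identity pre-map. -/
def PreMap.id (G : CGraph) : PreMap G G := ⟨fun x => x, fun a => a⟩

/-- Composition of pre-maps: `f` first, then `g`. -/
def PreMap.comp {G H K : CGraph} (f : PreMap G H) (g : PreMap H K) : PreMap G K :=
  ⟨g.fv ∘ f.fv, f.fa ∘ g.fa⟩

/-- A combinatorial graph map is inert if `f_v⁻¹(w)` has exactly one element for every
vertex `w` of the target, and `f_a⁻¹(a)` is empty only when `f_v(t(a)) = ∞`. -/
def IsInert {G H : CGraph} (f : PreMap G H) : Prop :=
  (∀ w : H.V, ∃! v : G.V, f.fv (some v) = some w) ∧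
  (∀ a : G.A, (∀ b : H.A, f.fa b ≠ a) → f.fv (G.t a) = none)

/-- A combinatorial graph map is active if `f_v⁻¹(∞) = {∞}` and none of the bivalent
paths `f_a⁻¹(a)` passes through `∞`. -/
def IsActive {G H : CGraph} (f : PreMap G H) : Prop :=
  (∀ x : Option G.V, f.fv x = none → x = none) ∧
  (∀ (a : G.A) (l : List H.A), FiberList f a l →
    ∀ (i : ℕ) (h : i + 1 < l.length), H.t (l.get ⟨i, Nat.lt_of_succ_lt h⟩) ≠ none)

/-- An isomorphism of graphs: a graph map with a two-sided inverse graph map. -/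
def IsGraphIso {G H : CGraph} (f : PreMap G H) : Prop :=
  IsGraphMap f ∧ ∃ g : PreMap H G, IsGraphMap g ∧
    f.comp g = PreMap.id G ∧ g.comp f = PreMap.id H

end CGraph

namespace CGraph

/-- The condition for an arc of `Γ` to belong to the fiber of a pre-map `f : Γ → Λ`
over a vertex `w` of `Λ`: the arc (and its `†`-partner) is not in the image of `f_a`,
and both of its endpoints are vertices lying in `f_v⁻¹(w)`. -/
def FiberArc {G H : CGraph} (f : PreMap G H) (w : H.V) (a : G.A) : Prop :=
  a ∉ Set.range f.fa ∧ G.dag a ∉ Set.range f.fa ∧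
    (∃ v, G.t a = some v ∧ f.fv (some v) = some w) ∧
    (∃ v, G.t (G.dag a) = some v ∧ f.fv (some v) = some w)

/-- The fiber `f⁻¹(w)` of a pre-map `f : Γ → Λ` over a vertex `w` of `Λ`: the subgraph
of `Γ` with vertex set `f_v⁻¹(w)` and arc set the arcs outside the image of `f_a` with
both endpoints in `f_v⁻¹(w)`. -/
noncomputable def fiber {G H : CGraph} (f : PreMap G H) (w : H.V) : CGraph where
  V := {v : G.V // f.fv (some v) = some w}
  A := {a : G.A // FiberArc f w a}
  fintypeV := Fintype.ofFinite _
  fintypeA := Fintype.ofFinite _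
  dag a := ⟨G.dag a.1, a.2.2.1, by rw [G.dag_dag]; exact a.2.1, a.2.2.2.2, by
    rw [G.dag_dag]; exact a.2.2.2.1⟩
  dag_dag a := Subtype.ext (G.dag_dag a.1)
  dag_ne a h := G.dag_ne a.1 (congrArg Subtype.val h)
  t a := some ⟨a.2.2.2.1.choose, a.2.2.2.1.choose_spec.2⟩

end CGraph

namespace CGraph

/-- The first Betti number of a finite graph:
`#edges − #vertices + #components` (one summand per connected component; `0` for the
empty graph).  Edges are pairs `{a, a†}` of arcs, and connected components are the
equivalence classes of `V ⊔ A` under the equivalence relation generated by `Touch`. -/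
noncomputable def b1 (G : CGraph) : ℕ :=
  Fintype.card G.A / 2 + Nat.card (Quot G.Touch) - Fintype.card G.V

end CGraph


namespace CGraph

lemma arcs_even (G : CGraph) : 2 ∣ Fintype.card G.A :=
  even_card_of_invol _ G.A inferInstance rfl G.dag G.dag_dag G.dag_ne

lemma connected_quot_card (G : CGraph) (hG : G.Connected) : Nat.card (Quot G.Touch) = 1 := by
  obtain ⟨⟨x⟩, hall⟩ := hG
  have hq : ∀ q : Quot G.Touch, q = Quot.mk _ x := by
    intro q; induction q using Quot.ind with
    | _ y => exact Quot.eqvGen_sound (hall y x)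
  haveI : Unique (Quot G.Touch) := ⟨⟨Quot.mk _ x⟩, hq⟩
  exact Nat.card_unique

/-- Remove the edge `{a₀, †a₀}` from a graph. -/
noncomputable def removeEdge (G : CGraph) (a₀ : G.A) : CGraph where
  V := G.V
  A := {a : G.A // a ≠ a₀ ∧ a ≠ G.dag a₀}
  fintypeA := Fintype.ofFinite _
  dag b := ⟨G.dag b.1, fun h => b.2.2 (by have := congrArg G.dag h; rwa [G.dag_dag] at this),
    fun h => b.2.1 (by have := congrArg G.dag h; rwa [G.dag_dag, G.dag_dag] at this)⟩
  dag_dag b := Subtype.ext (G.dag_dag b.1)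
  dag_ne b h := G.dag_ne b.1 (congrArg Subtype.val h)
  t b := G.t b.1

lemma quot_card_removeEdge (G : CGraph) (a₀ : G.A) :
    Nat.card (Quot (removeEdge G a₀).Touch) ≤ Nat.card (Quot G.Touch) + 1 := by
  classical
  set X := removeEdge G a₀ with hX
  rcases isEmpty_or_nonempty (X.V ⊕ X.A) with he | hne
  · haveI : IsEmpty (Quot X.Touch) :=
      ⟨fun q => by obtain ⟨x, -⟩ := Quot.exists_rep q; exact he.elim x⟩
    rw [Nat.card_of_isEmpty]
    omega
  · obtain ⟨z₀⟩ := hne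
    set tgt : X.V ⊕ X.A := (G.t a₀).elim ((G.t (G.dag a₀)).elim z₀ Sum.inl) Sum.inl with htgt
    set tgt2 : X.V ⊕ X.A := (G.t (G.dag a₀)).elim tgt Sum.inl with htgt2
    set π : (G.V ⊕ G.A) → (X.V ⊕ X.A) := fun x => match x with
      | Sum.inl v => Sum.inl v
      | Sum.inr a => if h : a = a₀ ∨ a = G.dag a₀ then tgt else Sum.inr ⟨a, not_or.mp h⟩
      with hπ
    have hπl : ∀ v : G.V, π (Sum.inl v) = Sum.inl v := fun v => rfl
    have hπr : ∀ (a : G.A) (_ : a = a₀ ∨ a = G.dag a₀), π (Sum.inr a) = tgt := by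
      intro a h; simp only [hπ]; exact dif_pos h
    have hπn : ∀ (a : G.A) (h : ¬(a = a₀ ∨ a = G.dag a₀)),
        π (Sum.inr a) = Sum.inr ⟨a, not_or.mp h⟩ := by
      intro a h; simp only [hπ]; exact dif_neg h
    set rp : (X.V ⊕ X.A) → (X.V ⊕ X.A) → Prop := pairRel X.Touch tgt tgt2 with hrp
    -- transfer of single Touch steps
    have step : ∀ x y, G.Touch x y → Relation.EqvGen rp (π x) (π y) := by
      intro x y hxy
      cases hxy with
      | dag c =>
        by_cases hc : c = a₀ ∨ c = G.dag a₀
        · have hdc : G.dag c = a₀ ∨ G.dag c = G.dag a₀ := by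
            rcases hc with rfl | rfl
            · exact Or.inr rfl
            · exact Or.inl (G.dag_dag a₀)
          rw [hπr c hc, hπr _ hdc]
          exact Relation.EqvGen.refl _
        · have hdc : ¬(G.dag c = a₀ ∨ G.dag c = G.dag a₀) := by
            rintro (h | h)
            · exact hc (Or.inr (by rw [← h, G.dag_dag]))
            · exact hc (Or.inl (by have := congrArg G.dag h; rwa [G.dag_dag, G.dag_dag] at this))
          rw [hπn c hc, hπn _ hdc]
          apply Relation.EqvGen.rel
          apply Or.inl
          have : (⟨G.dag c, not_or.mp hdc⟩ : X.A) = X.dag ⟨c, not_or.mp hc⟩ := Subtype.ext rfl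
          rw [this]
          exact Touch.dag _
      | incid c v hcv =>
        by_cases hc1 : c = a₀
        · subst hc1
          have htv : tgt = Sum.inl v := by rw [htgt, hcv]; rfl
          rw [hπr c (Or.inl rfl), hπl, htv]
          exact Relation.EqvGen.refl _
        · by_cases hc2 : c = G.dag a₀
          · subst hc2
            have h2 : tgt2 = Sum.inl v := by rw [htgt2, hcv]; rfl
            rw [hπr _ (Or.inr rfl), hπl, ← h2]
            exact Relation.EqvGen.rel _ _ (Or.inr ⟨rfl, rfl⟩)
          · rw [hπn c (not_or.mpr ⟨hc1, hc2⟩), hπl]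
            exact Relation.EqvGen.rel _ _ (Or.inl (show X.Touch (Sum.inr (⟨c, hc1, hc2⟩ : X.A)) (Sum.inl v) from Touch.incid (G := X) (⟨c, hc1, hc2⟩ : X.A) v hcv))
    -- π is a retraction of the inclusion
    set ι : (X.V ⊕ X.A) → (G.V ⊕ G.A) := fun x => match x with
      | Sum.inl v => Sum.inl v
      | Sum.inr a => Sum.inr a.1
      with hι
    have retr : ∀ b, π (ι b) = b := by
      rintro (v | ⟨a, ha⟩)
      · rfl
      · show π (Sum.inr a) = _
        rw [hπn a (not_or.mpr ha)]
    have wd : ∀ a b : G.V ⊕ G.A, G.Touch a b → Quot.mk rp (π a) = Quot.mk rp (π b) :=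
      fun a b h => Quot.eqvGen_sound (step a b h)
    set Φ : Quot G.Touch → Quot rp := Quot.lift (fun x => Quot.mk rp (π x)) wd with hΦ
    have surj : Function.Surjective Φ := by
      intro q
      induction q using Quot.ind with
      | _ b =>
        refine ⟨Quot.mk _ (ι b), ?_⟩
        show Quot.mk rp (π (ι b)) = _
        rw [retr b]
    have h1 : Nat.card (Quot rp) ≤ Nat.card (Quot G.Touch) :=
      Nat.card_le_card_of_surjective _ surj
    have h2 : Nat.card (Quot X.Touch) ≤ Nat.card (Quot (pairRel X.Touch tgt tgt2)) + 1 :=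
      quot_card_le_pairRel X.Touch tgt tgt2
    rw [← hrp] at h2
    omega

lemma eqvGen_eq_of_no_rel {α : Type} {r : α → α → Prop} (hr : ∀ a b, ¬ r a b)
    {x y : α} (h : Relation.EqvGen r x y) : x = y := by
  induction h with
  | rel a b hab => exact absurd hab (hr a b)
  | refl a => rfl
  | symm a b _ ih => exact ih.symm
  | trans a b c _ _ ih1 ih2 => exact ih1.trans ih2

lemma vertices_le_aux : ∀ (n : ℕ) (G : CGraph), Fintype.card G.A = n →
    Fintype.card G.V ≤ Fintype.card G.A / 2 + Nat.card (Quot G.Touch) := by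
  intro n
  induction n using Nat.strong_induction_on with
  | _ n ih =>
    intro G hn
    rcases isEmpty_or_nonempty G.A with he | hne
    · have hinj : Function.Injective (fun v : G.V => Quot.mk G.Touch (Sum.inl v)) := by
        intro v v' h
        have := Quot.eq.mp h
        have := eqvGen_eq_of_no_rel (fun a b hab => by cases hab with
          | dag c => exact he.elim c
          | incid c _ _ => exact he.elim c) this
        exact Sum.inl.injEq .. ▸ this
      calc Fintype.card G.V = Nat.card G.V := (Nat.card_eq_fintype_card).symm
        _ ≤ Nat.card (Quot G.Touch) := Nat.card_le_card_of_injective _ hinj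
        _ ≤ _ := Nat.le_add_left _ _
    · obtain ⟨a₀⟩ := hne
      set X := removeEdge G a₀ with hX
      have hne : a₀ ≠ G.dag a₀ := Ne.symm (G.dag_ne a₀)
      classical
      have hcard : Fintype.card X.A = n - 2 := by
        rw [← hn]
        calc Fintype.card X.A
            = Fintype.card {a : G.A // a ≠ a₀ ∧ a ≠ G.dag a₀} := Fintype.card_congr (Equiv.refl _)
          _ = Fintype.card G.A - 2 := card_compl_pair a₀ (G.dag a₀) hne
      have hn2 : 2 ≤ n := by
        rw [← hn]
        have h := Finset.card_le_univ ({a₀, G.dag a₀} : Finset G.A)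
        rwa [Finset.card_pair hne] at h
      have hIH := ih (n - 2) (by omega) X hcard
      rw [hcard] at hIH
      have hC := quot_card_removeEdge G a₀
      rw [← hX] at hC
      have hVX : Fintype.card X.V = Fintype.card G.V := rfl
      rw [hVX] at hIH
      have hdvd : 2 ∣ n := hn ▸ arcs_even G
      rw [hn]
      omega

lemma vertices_le (G : CGraph) :
    Fintype.card G.V ≤ Fintype.card G.A / 2 + Nat.card (Quot G.Touch) :=
  vertices_le_aux _ G rfl

end CGraph


namespace CGraph

lemma isPath_append (G : CGraph) : ∀ (l1 l2 : List G.A) (s m e : Option G.V),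
    G.IsPath l1 s m → G.IsPath l2 m e → G.IsPath (l1 ++ l2) s e := by
  intro l1
  induction l1 with
  | nil =>
    intro l2 s m e h1 h2
    have hsm : s = m := h1
    rw [List.nil_append, hsm]
    exact h2
  | cons a l ih =>
    intro l2 s m e h1 h2
    exact ⟨h1.1, ih _ _ _ _ h1.2 h2⟩

lemma isPath_reverse (G : CGraph) : ∀ (l : List G.A) (s e : Option G.V),
    G.IsPath l s e → G.IsPath ((l.map G.dag).reverse) e s := by
  intro l
  induction l with
  | nil =>
    intro s e h
    exact (show s = e from h).symm
  | cons a l ih =>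
    intro s e h
    rw [List.map_cons, List.reverse_cons]
    refine isPath_append G _ _ e (G.t a) s (ih _ _ h.2) ?_
    refine ⟨?_, ?_⟩
    · rw [G.dag_dag]
    · exact h.1

lemma isPath_get_succ (G : CGraph) : ∀ (l : List G.A) (s e : Option G.V),
    G.IsPath l s e → ∀ (i : ℕ) (h : i + 1 < l.length),
      G.t (G.dag (l.get ⟨i + 1, h⟩)) = G.t (l.get ⟨i, Nat.lt_of_succ_lt h⟩) := by
  intro l
  induction l with
  | nil => intro s e _ i h; simp at h
  | cons a l ih =>
    intro s e hp i h
    match i with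
    | 0 =>
      have hl : 0 < l.length := by simpa using h
      match l, hl, hp with
      | b :: l', _, hp =>
        exact hp.2.1
    | (j+1) =>
      have h' : j + 1 < l.length := by simpa using h
      exact ih (G.t a) e hp.2 j h'

lemma isPath_last (G : CGraph) : ∀ (l : List G.A) (s e : Option G.V),
    G.IsPath l s e → ∀ (h : 0 < l.length),
      G.t (l.get ⟨l.length - 1, by omega⟩) = e := by
  intro l
  induction l with
  | nil => intro s e _ h; simp at h
  | cons a l ih =>
    intro s e hp h
    match l, hp with
    | [], hp => exact hp.2
    | b :: l', hp =>
      have := ih (G.t a) e hp.2 (by simp)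
      simpa using this

end CGraph


namespace CGraph

lemma dag_injective (G : CGraph) : Function.Injective G.dag := by
  intro x y h
  rw [← G.dag_dag x, h, G.dag_dag]

lemma isPath_get_zero (G : CGraph) (l : List G.A) (s e : Option G.V)
    (hp : G.IsPath l s e) (h : 0 < l.length) :
    G.t (G.dag (l.get ⟨0, h⟩)) = s := by
  match l, hp with
  | a :: l', hp => exact hp.1

lemma two_arcs (H : CGraph) {w : H.V} (hw : H.Bivalent w) {x y : H.A}
    (hx : H.t x = some w) (hy : H.t y = some w) (hxy : x ≠ y) :
    ∀ z, H.t z = some w → z = x ∨ z = y := by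
  classical
  have hcard : (Finset.univ.filter fun a => H.t a = some w).card = 2 := by
    have := hw
    unfold Bivalent valence at this
    rw [Nat.card_eq_fintype_card, Fintype.card_subtype] at this
    exact this
  have hsub : ({x, y} : Finset H.A) ⊆ Finset.univ.filter fun a => H.t a = some w := by
    intro z hz
    simp only [Finset.mem_insert, Finset.mem_singleton] at hz
    rcases hz with rfl | rfl <;> simp [hx, hy]
  have heq : ({x, y} : Finset H.A) = Finset.univ.filter fun a => H.t a = some w := by
    apply Finset.eq_of_subset_of_card_le hsub
    rw [hcard, Finset.card_pair hxy]
  intro z hz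
  have : z ∈ ({x, y} : Finset H.A) := by
    rw [heq]; simp [hz]
  simpa using this

section Map

variable {G H : CGraph} {f : PreMap G H}

lemma range_dag (hf : IsGraphMap f) {a : G.A} (ha : a ∈ Set.range f.fa) :
    G.dag a ∈ Set.range f.fa := by
  obtain ⟨b, rfl⟩ := ha
  exact ⟨H.dag b, hf.2.1 b⟩

lemma fiberArc_dag {w : H.V} {c : G.A} (h : FiberArc f w c) : FiberArc f w (G.dag c) :=
  ⟨h.2.1, by rw [G.dag_dag]; exact h.1, h.2.2.2, by rw [G.dag_dag]; exact h.2.2.1⟩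

lemma fiberList_nil (hf : IsGraphMap f) {a : G.A} (ha : a ∉ Set.range f.fa)
    {l : List H.A} (hl : FiberList f a l) : l = [] := by
  cases l with
  | nil => rfl
  | cons b l' => exact absurd ⟨b, (hl.1 b).mp List.mem_cons_self⟩ ha

lemma collapsed_eq (hf : IsGraphMap f) {a : G.A} (ha : a ∉ Set.range f.fa) :
    f.fv (G.t (G.dag a)) = f.fv (G.t a) := by
  obtain ⟨l, hl⟩ := hf.2.2.1 a
  have := fiberList_nil hf ha hl
  subst this
  exact hl.2.2.1

lemma fa_get {a : G.A} {l : List H.A} (hl : FiberList f a l) {i : ℕ} (h : i < l.length) :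
    f.fa (l.get ⟨i, h⟩) = a :=
  (hl.1 _).mp (l.get_mem _)

/-- The two arcs of `H` at an intermediate vertex of a fiber path. -/
lemma arcs_at_mid (hf : IsGraphMap f) {a : G.A} {l : List H.A} (hl : FiberList f a l)
    {i : ℕ} (h : i + 1 < l.length) {w : H.V}
    (hw : H.t (l.get ⟨i, Nat.lt_of_succ_lt h⟩) = some w) :
    ∀ z, H.t z = some w →
      z = l.get ⟨i, Nat.lt_of_succ_lt h⟩ ∨ z = H.dag (l.get ⟨i + 1, h⟩) := by
  have hbiv : H.Bivalent w := by
    rcases hl.2.2.2 i h with hn | ⟨v, hv, hb⟩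
    · rw [hn] at hw; cases hw
    · rw [hv] at hw; cases hw; exact hb
  have hy : H.t (H.dag (l.get ⟨i + 1, h⟩)) = some w := by
    rw [isPath_get_succ H l _ _ hl.2.2.1 i h, hw]
  have hxy : l.get ⟨i, Nat.lt_of_succ_lt h⟩ ≠ H.dag (l.get ⟨i + 1, h⟩) := by
    intro he
    have h1 : f.fa (l.get ⟨i, Nat.lt_of_succ_lt h⟩) = a := fa_get hl _
    have h2 : f.fa (H.dag (l.get ⟨i + 1, h⟩)) = G.dag a := by
      rw [hf.2.1, fa_get hl h]
    rw [he, h2] at h1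
    exact G.dag_ne a h1
  exact two_arcs H hbiv hw hy hxy

lemma mids_distinct (hf : IsGraphMap f) {a : G.A} {l : List H.A} (hl : FiberList f a l)
    {i j : ℕ} (hi : i + 1 < l.length) (hj : j + 1 < l.length) (hij : i ≠ j) {w : H.V}
    (hwi : H.t (l.get ⟨i, Nat.lt_of_succ_lt hi⟩) = some w) :
    H.t (l.get ⟨j, Nat.lt_of_succ_lt hj⟩) ≠ some w := by
  intro hwj
  rcases arcs_at_mid hf hl hi hwi _ hwj with he | he
  · exact (hij (congrArg Fin.val ((hl.2.1.get_inj_iff).mp he)).symm).elim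
  · have h1 : f.fa (l.get ⟨j, Nat.lt_of_succ_lt hj⟩) = a := fa_get hl _
    have h2 : f.fa (H.dag (l.get ⟨i + 1, hi⟩)) = G.dag a := by rw [hf.2.1, fa_get hl hi]
    rw [he, h2] at h1
    exact G.dag_ne a h1

end Map

end CGraph


namespace CGraph

section MapM

variable {G H : CGraph} {f : PreMap G H}

/-- An intermediate vertex of a fiber path is not in the image of `f_v`
(when the source graph is connected and the map is active). -/
lemma mid_not_image (hG : G.Connected) (hf : IsGraphMap f) (hact : IsActive f)
    {a : G.A} {l : List H.A} (hl : FiberList f a l)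
    {i : ℕ} (h : i + 1 < l.length) {w : H.V}
    (hw : H.t (l.get ⟨i, Nat.lt_of_succ_lt h⟩) = some w) :
    ∀ v : G.V, f.fv (some v) ≠ some w := by
  intro v₀ hv₀
  have harcs := arcs_at_mid hf hl h hw
  have hfax : f.fa (l.get ⟨i, Nat.lt_of_succ_lt h⟩) = a := fa_get hl _
  have hfay : f.fa (H.dag (l.get ⟨i + 1, h⟩)) = G.dag a := by rw [hf.2.1, fa_get hl h]
  -- basic length facts
  have hlen : 0 < l.length := by omega
  -- M1: every arc of G at a vertex in the fiber of w is a fiber arc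
  have M1 : ∀ (c : G.A) (v : G.V), G.t c = some v → f.fv (some v) = some w →
      FiberArc f w c := by
    intro c v hc hv
    have hcr : c ∉ Set.range f.fa := by
      rintro ⟨b, rfl⟩
      obtain ⟨lc, hlc⟩ := hf.2.2.1 (f.fa b)
      have hbc : b ∈ lc := (hlc.1 b).mpr rfl
      have hlenc : 0 < lc.length := List.length_pos_iff.mpr (List.ne_nil_of_mem hbc)
      have hlaste := isPath_last H lc _ _ hlc.2.2.1 hlenc
      have hlastw : H.t (lc.get ⟨lc.length - 1, by omega⟩) = some w := by
        rw [hlaste, hc, hv]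
      have hfalast : f.fa (lc.get ⟨lc.length - 1, by omega⟩) = f.fa b := fa_get hlc _
      rcases harcs _ hlastw with hz | hz
      · -- c = a
        have hca : f.fa b = a := by rw [← hfalast, hz, hfax]
        have hea : f.fv (G.t a) = some w := by rw [← hca, hc, hv]
        have hlastl := isPath_last H l _ _ hl.2.2.1 hlen
        have hlw : H.t (l.get ⟨l.length - 1, by omega⟩) = some w := by rw [hlastl, hea]
        rcases harcs _ hlw with hz' | hz'
        · have := congrArg Fin.val ((hl.2.1.get_inj_iff).mp hz')
          simp only at this
          omega
        · have h1 : f.fa (l.get ⟨l.length - 1, by omega⟩) = a := fa_get hl _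
          rw [hz', hfay] at h1
          exact G.dag_ne a h1
      · -- c = G.dag a
        have hca : f.fa b = G.dag a := by rw [← hfalast, hz, hfay]
        have hsa : f.fv (G.t (G.dag a)) = some w := by rw [← hca, hc, hv]
        have hhead := isPath_get_zero H l _ _ hl.2.2.1 hlen
        have hh : H.t (H.dag (l.get ⟨0, hlen⟩)) = some w := by rw [hhead, hsa]
        rcases harcs _ hh with hz' | hz'
        · have h1 : f.fa (H.dag (l.get ⟨0, hlen⟩)) = G.dag a := by rw [hf.2.1, fa_get hl hlen]
          rw [hz', hfax] at h1
          exact G.dag_ne a h1.symm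
        · have := H.dag_injective hz'
          have := congrArg Fin.val ((hl.2.1.get_inj_iff).mp this)
          simp only at this
          omega
    have hcrd : G.dag c ∉ Set.range f.fa := fun hd => hcr (by
      have := range_dag hf hd; rwa [G.dag_dag] at this)
    have hse : f.fv (G.t (G.dag c)) = f.fv (G.t c) := collapsed_eq hf hcr
    have hse' : f.fv (G.t (G.dag c)) = some w := by rw [hse, hc, hv]
    have hdagv : ∃ v', G.t (G.dag c) = some v' ∧ f.fv (some v') = some w := by
      cases hdc : G.t (G.dag c) with
      | none => rw [hdc] at hse'; rw [hf.1] at hse'; cases hse'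
      | some v' => exact ⟨v', rfl, by rw [← hdc]; exact hse'⟩
    exact ⟨hcr, hcrd, ⟨v, hc, hv⟩, hdagv⟩
  -- the closure predicate
  set P : G.V ⊕ G.A → Prop := fun x => match x with
    | Sum.inl v => f.fv (some v) = some w
    | Sum.inr c => FiberArc f w c
    with hP
  have hstep : ∀ p q, G.Touch p q → (P p ↔ P q) := by
    intro p q hpq
    cases hpq with
    | dag c =>
      constructor
      · exact fun hc => fiberArc_dag hc
      · intro hc
        have := fiberArc_dag (f := f) hc
        rwa [G.dag_dag] at this
    | incid c v hcv =>
      constructor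
      · rintro ⟨-, -, ⟨v', hv', hw'⟩, -⟩
        rw [hcv] at hv'
        cases hv'
        exact hw'
      · intro hv
        exact M1 c v hcv hv
  have htrans : ∀ p q, Relation.EqvGen G.Touch p q → (P p ↔ P q) := by
    intro p q hpq
    induction hpq with
    | rel a b hab => exact hstep a b hab
    | refl a => exact Iff.rfl
    | symm a b _ ih => exact ih.symm
    | trans a b c _ _ ih1 ih2 => exact ih1.trans ih2
  have h1 : P (Sum.inl v₀) := hv₀
  have h2 : P (Sum.inr a) := (htrans _ _ (hG.2 (Sum.inl v₀) (Sum.inr a))).mp h1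
  exact h2.1 ⟨_, hfax⟩

end MapM

end CGraph


namespace CGraph

section MapU

variable {G H : CGraph} {f : PreMap G H}

lemma fiberList_length_eq {a : G.A} {l l' : List H.A}
    (hl : FiberList f a l) (hl' : FiberList f a l') : l.length = l'.length := by
  classical
  rw [← List.toFinset_card_of_nodup hl.2.1, ← List.toFinset_card_of_nodup hl'.2.1]
  congr 1
  ext b
  simp only [List.mem_toFinset, hl.1 b, hl'.1 b]

lemma start_is_image (hf : IsGraphMap f) {x : Option G.V} {w : H.V}
    (hx : f.fv x = some w) : ∃ v : G.V, f.fv (some v) = some w := by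
  cases x with
  | none => rw [hf.1] at hx; cases hx
  | some v => exact ⟨v, hx⟩

lemma fiberList_unique (hG : G.Connected) (hf : IsGraphMap f) (hact : IsActive f)
    {a : G.A} {l l' : List H.A} (hl : FiberList f a l) (hl' : FiberList f a l') :
    l = l' := by
  have hlen : l.length = l'.length := fiberList_length_eq hl hl'
  have key : ∀ k (hk : k < l.length), l.get ⟨k, hk⟩ = l'.get ⟨k, hlen ▸ hk⟩ := by
    intro k
    induction k with
    | zero =>
      intro hk
      have hk' : 0 < l'.length := hlen ▸ hk
      have hmem : l'.get ⟨0, hk'⟩ ∈ l := (hl.1 _).mpr (fa_get hl' _)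
      obtain ⟨⟨j, hj⟩, hget⟩ := List.mem_iff_get.mp hmem
      match j with
      | 0 => rw [← hget]
      | (m+1) =>
        exfalso
        have h1 : H.t (H.dag (l.get ⟨m+1, hj⟩)) = H.t (l.get ⟨m, Nat.lt_of_succ_lt hj⟩) :=
          isPath_get_succ H l _ _ hl.2.2.1 m hj
        have h2 : H.t (H.dag (l'.get ⟨0, hk'⟩)) = f.fv (G.t (G.dag a)) :=
          isPath_get_zero H l' _ _ hl'.2.2.1 hk'
        rw [hget] at h1
        have hs : f.fv (G.t (G.dag a)) = H.t (l.get ⟨m, Nat.lt_of_succ_lt hj⟩) := by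
          rw [← h2, h1]
        have hnn : H.t (l.get ⟨m, Nat.lt_of_succ_lt hj⟩) ≠ none := hact.2 a l hl m hj
        cases hws : H.t (l.get ⟨m, Nat.lt_of_succ_lt hj⟩) with
        | none => exact hnn hws
        | some w0 =>
          obtain ⟨v, hv⟩ := start_is_image hf (by rw [hs, hws])
          exact mid_not_image hG hf hact hl hj hws v hv
    | succ k ih =>
      intro hk1
      have hk : k < l.length := Nat.lt_of_succ_lt hk1
      have hIH := ih hk
      have hnn : H.t (l.get ⟨k, hk⟩) ≠ none := hact.2 a l hl k hk1
      cases hws : H.t (l.get ⟨k, hk⟩) with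
      | none => exact absurd hws hnn
      | some w =>
        have hk1' : k + 1 < l'.length := hlen ▸ hk1
        have hz : H.t (H.dag (l'.get ⟨k+1, hk1'⟩)) = some w := by
          rw [isPath_get_succ H l' _ _ hl'.2.2.1 k hk1']
          rw [← hIH]
          exact hws
        rcases arcs_at_mid hf hl hk1 hws _ hz with he | he
        · exfalso
          have h1 : f.fa (H.dag (l'.get ⟨k+1, hk1'⟩)) = G.dag a := by
            rw [hf.2.1, fa_get hl' _]
          rw [he, fa_get hl _] at h1
          exact G.dag_ne a h1.symm
        · exact (H.dag_injective he).symm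
  exact List.ext_get hlen (fun n h1 h2 => key n h1)

lemma fiberList_rev (hf : IsGraphMap f) {a : G.A} {l : List H.A} (hl : FiberList f a l) :
    FiberList f (G.dag a) ((l.map H.dag).reverse) := by
  refine ⟨?_, ?_, ?_, ?_⟩
  · intro b
    rw [List.mem_reverse, List.mem_map]
    constructor
    · rintro ⟨c, hc, rfl⟩
      rw [hf.2.1, (hl.1 c).mp hc]
    · intro hb
      refine ⟨H.dag b, ?_, H.dag_dag b⟩
      rw [hl.1, hf.2.1]
      have := congrArg G.dag hb
      rwa [G.dag_dag] at this
  · exact List.nodup_reverse.mpr (hl.2.1.map H.dag_injective)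
  · rw [G.dag_dag]
    exact isPath_reverse H l _ _ hl.2.2.1
  · intro i h
    have hlt : i + 1 < l.length := by simpa using h
    have hi2 : l.length - 1 - i = l.length - 2 - i + 1 := by omega
    have hget : ((l.map H.dag).reverse).get ⟨i, Nat.lt_of_succ_lt h⟩
        = H.dag (l.get ⟨l.length - 1 - i, by omega⟩) := by
      simp [List.get_eq_getElem, List.getElem_reverse, List.getElem_map]
    rw [hget]
    have hcons := isPath_get_succ H l _ _ hl.2.2.1 (l.length - 2 - i) (by omega)
    have hidx : (⟨l.length - 2 - i + 1, by omega⟩ : Fin l.length) = ⟨l.length - 1 - i, by omega⟩ := by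
      exact Fin.mk_eq_mk.mpr (by omega)
    rw [hidx] at hcons
    rw [hcons]
    exact hl.2.2.2 (l.length - 2 - i) (by omega)

end MapU

end CGraph


namespace CGraph

section MapF

variable {G H : CGraph} {f : PreMap G H}

lemma onFiberPath_dag (hf : IsGraphMap f) {w : H.V} {a : G.A}
    (h : OnFiberPath f w a) : OnFiberPath f w (G.dag a) := by
  obtain ⟨l, hl, i, hi, hw⟩ := h
  refine ⟨(l.map H.dag).reverse, fiberList_rev hf hl, l.length - 2 - i, ?_, ?_⟩
  · simp only [List.length_reverse, List.length_map]
    omega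
  · have hj1 : l.length - 2 - i + 1 < l.length := by omega
    have hget : ((l.map H.dag).reverse).get ⟨l.length - 2 - i, by simp; omega⟩
        = H.dag (l.get ⟨l.length - 1 - (l.length - 2 - i), by omega⟩) := by
      simp [List.get_eq_getElem, List.getElem_reverse, List.getElem_map]
    rw [hget]
    have hidx : (⟨l.length - 1 - (l.length - 2 - i), by omega⟩ : Fin l.length)
        = ⟨i + 1, hi⟩ := Fin.mk_eq_mk.mpr (by omega)
    rw [hidx]
    rw [isPath_get_succ H l _ _ hl.2.2.1 i hi]
    exact hw

lemma onFiberPath_iff_mid (hG : G.Connected) (hf : IsGraphMap f) (hact : IsActive f)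
    (L : ∀ a : G.A, List H.A) (hL : ∀ a, FiberList f a (L a)) {w : H.V} {a : G.A} :
    OnFiberPath f w a ↔ MidVertexOf H (L a) w := by
  constructor
  · rintro ⟨l, hl, hm⟩
    rwa [fiberList_unique hG hf hact hl (hL a)] at hm
  · intro hm
    exact ⟨L a, hL a, hm⟩

lemma fiber_t_eq {w : H.V} (c : (fiber f w).A) {v : G.V} (hv : G.t c.1 = some v)
    (hfv : f.fv (some v) = some w) : (fiber f w).t c = some ⟨v, hfv⟩ := by
  have hs := c.2.2.2.1.choose_spec.1
  have hc : c.2.2.2.1.choose = v := (Option.some_injective _ (hv.symm.trans hs)).symm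
  show (some ⟨c.2.2.2.1.choose, c.2.2.2.1.choose_spec.2⟩ : Option ((fiber f w).V)) = some ⟨v, hfv⟩
  exact congrArg some (Subtype.ext hc)

lemma fiber_quot_card_image (hf : IsGraphMap f) (hact : IsActive f) {w : H.V}
    (hw : ∃ v : G.V, f.fv (some v) = some w) :
    Nat.card (Quot (fiber f w).Touch) = 1 := by
  set F := fiber f w with hF
  apply connected_quot_card
  obtain ⟨v₀, hv₀⟩ := hw
  -- every arc is related to the vertex at its endpoint
  have harc : ∀ c : F.A, ∃ vc : F.V, Relation.EqvGen F.Touch (Sum.inr c) (Sum.inl vc) := by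
    intro c
    obtain ⟨v, hv, hfv⟩ := c.2.2.2.1
    exact ⟨⟨v, hfv⟩, Relation.EqvGen.rel _ _ (Touch.incid c ⟨v, hfv⟩ (fiber_t_eq c hv hfv))⟩
  -- any two vertices are related
  have hvv : ∀ u u' : F.V, Relation.EqvGen F.Touch (Sum.inl u) (Sum.inl u') := by
    have aux : ∀ (l : List G.A) (u u' : F.V), (∀ c ∈ l, c ∉ Set.range f.fa) →
        G.IsPath l (some u.1) (some u'.1) → Relation.EqvGen F.Touch (Sum.inl u) (Sum.inl u') := by
      intro l
      induction l with
      | nil =>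
        intro u u' _ hp
        have : u = u' := Subtype.ext (Option.some_injective _ hp)
        rw [this]
        exact Relation.EqvGen.refl _
      | cons c l ih =>
        intro u u' hnr hp
        have hcr : c ∉ Set.range f.fa := hnr c List.mem_cons_self
        have hcrd : G.dag c ∉ Set.range f.fa := fun hd => hcr (by
          have := range_dag hf hd; rwa [G.dag_dag] at this)
        have hceq : f.fv (G.t (G.dag c)) = f.fv (G.t c) := collapsed_eq hf hcr
        have hdagv : G.t (G.dag c) = some u.1 := hp.1
        have hfw : f.fv (G.t c) = some w := by
          rw [← hceq, hdagv, u.2]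
        obtain ⟨v₁, hv₁⟩ : ∃ v₁, G.t c = some v₁ := by
          cases hc : G.t c with
          | none => rw [hc, hf.1] at hfw; cases hfw
          | some v₁ => exact ⟨v₁, rfl⟩
        have hfv₁ : f.fv (some v₁) = some w := by rw [← hv₁]; exact hfw
        have hFA : FiberArc f w c := ⟨hcr, hcrd, ⟨v₁, hv₁, hfv₁⟩, ⟨u.1, hdagv, u.2⟩⟩
        set cf : F.A := ⟨c, hFA⟩ with hcf
        have h1 : F.Touch (Sum.inr (F.dag cf)) (Sum.inl u) := by
          apply Touch.incid
          have : (F.dag cf).1 = G.dag c := rfl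
          exact fiber_t_eq (F.dag cf) (by rw [this]; exact hdagv) u.2
        have h2 : F.Touch (Sum.inr cf) (Sum.inr (F.dag cf)) := Touch.dag cf
        have h3 : F.Touch (Sum.inr cf) (Sum.inl ⟨v₁, hfv₁⟩) :=
          Touch.incid cf ⟨v₁, hfv₁⟩ (fiber_t_eq cf hv₁ hfv₁)
        have h4 : Relation.EqvGen F.Touch (Sum.inl (⟨v₁, hfv₁⟩ : F.V)) (Sum.inl u') := by
          apply ih ⟨v₁, hfv₁⟩ u' (fun c' hc' => hnr c' (List.mem_cons_of_mem c hc'))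
          rw [← hv₁]
          exact hp.2
        refine Relation.EqvGen.trans _ _ _ ?_ h4
        refine Relation.EqvGen.trans _ _ _ (Relation.EqvGen.symm _ _ (Relation.EqvGen.rel _ _ h1)) ?_
        refine Relation.EqvGen.trans _ _ _ (Relation.EqvGen.symm _ _ (Relation.EqvGen.rel _ _ h2)) ?_
        exact Relation.EqvGen.rel _ _ h3
    intro u u'
    obtain ⟨l, hlnr, hlp⟩ := hf.2.2.2.1 u.1 u'.1 (by rw [u.2, u'.2])
      (by rw [u.2]; exact Option.some_ne_none _)
    exact aux l u u' hlnr hlp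
  constructor
  · exact ⟨Sum.inl ⟨v₀, hv₀⟩⟩
  · intro x y
    have hx : ∃ vx : F.V, Relation.EqvGen F.Touch x (Sum.inl vx) := by
      cases x with
      | inl u => exact ⟨u, Relation.EqvGen.refl _⟩
      | inr c => exact harc c
    have hy : ∃ vy : F.V, Relation.EqvGen F.Touch y (Sum.inl vy) := by
      cases y with
      | inl u => exact ⟨u, Relation.EqvGen.refl _⟩
      | inr c => exact harc c
    obtain ⟨vx, hvx⟩ := hx
    obtain ⟨vy, hvy⟩ := hy
    exact Relation.EqvGen.trans _ _ _ hvx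
      (Relation.EqvGen.trans _ _ _ (hvv vx vy) (Relation.EqvGen.symm _ _ hvy))

lemma fiber_quot_card_not_image {w : H.V}
    (hw : ∀ v : G.V, f.fv (some v) ≠ some w) :
    Nat.card (Quot (fiber f w).Touch) = 0 := by
  haveI : IsEmpty ((fiber f w).V ⊕ (fiber f w).A) := by
    constructor
    rintro (u | c)
    · exact hw u.1 u.2
    · obtain ⟨v, _, hfv⟩ := c.2.2.2.1
      exact hw v hfv
  haveI : IsEmpty (Quot (fiber f w).Touch) :=
    ⟨fun q => by obtain ⟨x, -⟩ := Quot.exists_rep q; exact IsEmpty.elim ‹_› x⟩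
  exact Nat.card_of_isEmpty

end MapF

end CGraph


namespace CGraph

section MapR

variable {G H : CGraph} {f : PreMap G H}

lemma notRange_fiberArc (hG : G.Connected) (hH : H.Connected) (hf : IsGraphMap f)
    (hact : IsActive f) {a : G.A} (ha : a ∉ Set.range f.fa) :
    ∃ w, FiberArc f w a ∧ f.fv (G.t a) = some w := by
  have hcrd : G.dag a ∉ Set.range f.fa := fun hd => ha (by
    have := range_dag hf hd; rwa [G.dag_dag] at this)
  have hceq : f.fv (G.t (G.dag a)) = f.fv (G.t a) := collapsed_eq hf ha
  cases hx : f.fv (G.t a) with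
  | some w =>
    obtain ⟨v, hv⟩ : ∃ v, G.t a = some v := by
      cases hta : G.t a with
      | none => rw [hta, hf.1] at hx; cases hx
      | some v => exact ⟨v, rfl⟩
    obtain ⟨v', hv'⟩ : ∃ v', G.t (G.dag a) = some v' := by
      cases htda : G.t (G.dag a) with
      | none => rw [htda, hf.1] at hceq; rw [← hceq] at hx; cases hx
      | some v' => exact ⟨v', rfl⟩
    refine ⟨w, ⟨ha, hcrd, ⟨v, hv, by rw [← hv]; exact hx⟩,
      ⟨v', hv', by rw [← hv', hceq]; exact hx⟩⟩, rfl⟩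

  | none =>
    exfalso
    have hta : G.t a = none := hact.1 _ hx
    have htda : G.t (G.dag a) = none := hact.1 _ (by rw [hceq]; exact hx)
    set Q : G.V ⊕ G.A → Prop := fun x => x = Sum.inr a ∨ x = Sum.inr (G.dag a) with hQ
    have hstep : ∀ p q, G.Touch p q → (Q p ↔ Q q) := by
      intro p q hpq
      cases hpq with
      | dag c =>
        constructor
        · rintro (hc | hc)
          · have : c = a := Sum.inr_injective hc
            exact Or.inr (by rw [this])
          · have : c = G.dag a := Sum.inr_injective hc
            exact Or.inl (by rw [this, G.dag_dag])
        · rintro (hc | hc)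
          · have h1 : G.dag c = a := Sum.inr_injective hc
            exact Or.inr (by rw [← h1, G.dag_dag])
          · have h1 : G.dag c = G.dag a := Sum.inr_injective hc
            exact Or.inl (by rw [G.dag_injective h1])
      | incid c v hcv =>
        constructor
        · rintro (hc | hc)
          · have : c = a := Sum.inr_injective hc
            rw [this, hta] at hcv; cases hcv
          · have : c = G.dag a := Sum.inr_injective hc
            rw [this, htda] at hcv; cases hcv
        · rintro (hc | hc) <;> cases hc
    have htrans : ∀ p q, Relation.EqvGen G.Touch p q → (Q p ↔ Q q) := by
      intro p q hpq
      induction hpq with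
      | rel x y hxy => exact hstep x y hxy
      | refl x => exact Iff.rfl
      | symm x y _ ih => exact ih.symm
      | trans x y z _ _ ih1 ih2 => exact ih1.trans ih2
    have hGV : ∀ v : G.V, False := fun v => by
      have := (htrans _ _ (hG.2 (Sum.inl v) (Sum.inr a))).mpr (Or.inl rfl)
      rcases this with h | h <;> cases h
    have hGA : ∀ c : G.A, c = a ∨ c = G.dag a := fun c => by
      have := (htrans _ _ (hG.2 (Sum.inr c) (Sum.inr a))).mpr (Or.inl rfl)
      rcases this with h | h
      · exact Or.inl (Sum.inr_injective h)
      · exact Or.inr (Sum.inr_injective h)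
    have hHA : ∀ b : H.A, False := fun b => by
      rcases hGA (f.fa b) with h | h
      · exact ha ⟨b, h⟩
      · exact hcrd ⟨b, h⟩
    have hHV : ∀ w : H.V, False := fun w => by
      have h5 := hf.2.2.2.2 w (fun v => (hGV v).elim)
      have hbiv := h5.1
      unfold Bivalent valence at hbiv
      haveI : IsEmpty {b : H.A // H.t b = some w} := ⟨fun b => hHA b.1⟩
      rw [Nat.card_of_isEmpty] at hbiv
      cases hbiv
    obtain ⟨x⟩ := hH.1
    cases x with
    | inl w => exact hHV w
    | inr b => exact hHA b

end MapR

end CGraph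


namespace CGraph

section MapC

open scoped Classical

variable {G H : CGraph} {f : PreMap G H}

open Finset in
lemma card_V_eq (hact : IsActive f) :
    Fintype.card G.V = ∑ w : H.V, Fintype.card {v : G.V // f.fv (some v) = some w} := by
  classical
  have hdisj : ∀ w ∈ (univ : Finset H.V), ∀ w' ∈ (univ : Finset H.V), w ≠ w' →
      Disjoint (univ.filter (fun v : G.V => f.fv (some v) = some w))
        (univ.filter (fun v : G.V => f.fv (some v) = some w')) := by
    intro w _ w' _ hne
    rw [Finset.disjoint_left]
    intro v hv hv'
    simp only [Finset.mem_filter] at hv hv'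
    exact hne (Option.some_injective _ (hv.2.symm.trans hv'.2))
  have huniv : (univ : Finset G.V) = univ.biUnion
      (fun w : H.V => univ.filter (fun v : G.V => f.fv (some v) = some w)) := by
    ext v
    simp only [Finset.mem_univ, Finset.mem_biUnion, Finset.mem_filter, true_and, true_iff]
    cases hfv : f.fv (some v) with
    | none => exact absurd (hact.1 _ hfv) (Option.some_ne_none v)
    | some w => exact ⟨w, rfl⟩
  rw [← Finset.card_univ, huniv, Finset.card_biUnion hdisj]
  exact Finset.sum_congr rfl (fun w _ => (Fintype.card_subtype _).symm)

open Finset in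
lemma card_A_eq (hG : G.Connected) (hH : H.Connected) (hf : IsGraphMap f)
    (hact : IsActive f) :
    Fintype.card G.A = (∑ w : H.V, Fintype.card {c : G.A // FiberArc f w c})
      + (univ.filter (fun a : G.A => a ∈ Set.range f.fa)).card := by
  classical
  have hsplit := Finset.card_filter_add_card_filter_not
    (s := (univ : Finset G.A)) (p := fun a => a ∈ Set.range f.fa)
  have hdisj : ∀ w ∈ (univ : Finset H.V), ∀ w' ∈ (univ : Finset H.V), w ≠ w' →
      Disjoint (univ.filter (fun c : G.A => FiberArc f w c))
        (univ.filter (fun c : G.A => FiberArc f w' c)) := by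
    intro w _ w' _ hne
    rw [Finset.disjoint_left]
    intro c hc hc'
    simp only [Finset.mem_filter] at hc hc'
    obtain ⟨v, hv, hfv⟩ := hc.2.2.2.1
    obtain ⟨v', hv', hfv'⟩ := hc'.2.2.2.1
    have : v = v' := Option.some_injective _ (hv.symm.trans hv')
    subst this
    exact hne (Option.some_injective _ (hfv.symm.trans hfv'))
  have hcup : univ.filter (fun a : G.A => ¬ a ∈ Set.range f.fa)
      = univ.biUnion (fun w : H.V => univ.filter (fun c : G.A => FiberArc f w c)) := by
    ext a
    simp only [Finset.mem_filter, Finset.mem_univ, true_and, Finset.mem_biUnion]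
    constructor
    · intro ha
      obtain ⟨w, hw, -⟩ := notRange_fiberArc hG hH hf hact ha
      exact ⟨w, hw⟩
    · rintro ⟨w, hw⟩
      exact hw.1
  rw [← Finset.card_univ, ← hsplit, hcup, Finset.card_biUnion hdisj]
  have hconv : ∑ w : H.V, (univ.filter (fun c : G.A => FiberArc f w c)).card
      = ∑ w : H.V, Fintype.card {c : G.A // FiberArc f w c} :=
    Finset.sum_congr rfl (fun w _ => (Fintype.card_subtype _).symm)
  omega

open Finset in
lemma card_HA_eq (L : ∀ a : G.A, List H.A) (hL : ∀ a, FiberList f a (L a)) :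
    Fintype.card H.A = ∑ a : G.A, (L a).length := by
  classical
  rw [← Finset.card_univ,
    Finset.card_eq_sum_card_fiberwise (f := f.fa) (t := univ) (fun x _ => Finset.mem_univ _)]
  apply Finset.sum_congr rfl
  intro a _
  rw [← List.toFinset_card_of_nodup (hL a).2.1]
  congr 1
  ext b
  simp only [Finset.mem_filter, Finset.mem_univ, true_and, List.mem_toFinset]
  exact ((hL a).1 b).symm

open Finset in
lemma row_count (hact : IsActive f)
    (hf : IsGraphMap f) (L : ∀ a : G.A, List H.A) (hL : ∀ a, FiberList f a (L a)) (a : G.A) :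
    (univ.filter (fun w : H.V => MidVertexOf H (L a) w)).card
      + (if a ∈ Set.range f.fa then 1 else 0) = (L a).length := by
  classical
  set l := L a with hl
  have hmem : ∀ b, b ∈ l ↔ f.fa b = a := (hL a).1
  by_cases hrng : a ∈ Set.range f.fa
  · have hlen : 0 < l.length := by
      obtain ⟨b, hb⟩ := hrng
      exact List.length_pos_iff.mpr (List.ne_nil_of_mem ((hmem b).mpr hb))
    rw [if_pos hrng]
    rcases Nat.lt_or_ge 1 l.length with h2 | h2
    · -- l.length ≥ 2
      obtain ⟨w₀, hw₀⟩ : ∃ w₀, H.t (l.get ⟨0, hlen⟩) = some w₀ := by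
        cases hx : H.t (l.get ⟨0, hlen⟩) with
        | none => exact absurd hx (hact.2 a l (hL a) 0 h2)
        | some w => exact ⟨w, rfl⟩
      set Fm : ℕ → H.V := fun i => ((l[i]?).bind H.t).getD w₀ with hFm
      have hFmval : ∀ (i : ℕ) (hi : i < l.length) (w : H.V),
          H.t (l.get ⟨i, hi⟩) = some w → Fm i = w := by
        intro i hi w hw
        rw [hFm]
        simp only [List.getElem?_eq_getElem hi]
        rw [List.get_eq_getElem] at hw
        simp [Option.bind, hw]
      have hsome : ∀ (i : ℕ) (hi : i + 1 < l.length), ∃ w, H.t (l.get ⟨i, Nat.lt_of_succ_lt hi⟩) = some w := by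
        intro i hi
        cases hx : H.t (l.get ⟨i, Nat.lt_of_succ_lt hi⟩) with
        | none => exact absurd hx (hact.2 a l (hL a) i hi)
        | some w => exact ⟨w, rfl⟩
      have hset : univ.filter (fun w : H.V => MidVertexOf H l w)
          = (Finset.range (l.length - 1)).image Fm := by
        ext w
        simp only [Finset.mem_filter, Finset.mem_univ, true_and, Finset.mem_image,
          Finset.mem_range]
        constructor
        · rintro ⟨i, hi, hw⟩
          exact ⟨i, by omega, hFmval i _ w hw⟩
        · rintro ⟨i, hi, hFi⟩
          have hi1 : i + 1 < l.length := by omega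
          obtain ⟨w', hw'⟩ := hsome i hi1
          have := hFmval i _ w' hw'
          rw [hFi] at this
          exact ⟨i, hi1, by rw [← this] at hw'; exact hw'⟩
      have hinj : Set.InjOn Fm (Finset.range (l.length - 1)) := by
        intro i hi j hj hij
        simp only [Finset.coe_range, Set.mem_Iio] at hi hj
        by_contra hne
        have hi1 : i + 1 < l.length := by omega
        have hj1 : j + 1 < l.length := by omega
        obtain ⟨wi, hwi⟩ := hsome i hi1
        obtain ⟨wj, hwj⟩ := hsome j hj1
        have h1 := hFmval i _ wi hwi
        have h2 := hFmval j _ wj hwj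
        rw [← hij, h1] at h2
        rw [← h2] at hwj
        exact mids_distinct hf (hL a) hi1 hj1 hne hwi hwj
      rw [hset, Finset.card_image_of_injOn hinj, Finset.card_range]
      omega
    · -- l.length = 1
      have hl1 : l.length = 1 := by omega
      have : univ.filter (fun w : H.V => MidVertexOf H l w) = ∅ := by
        ext w
        simp only [Finset.mem_filter, Finset.mem_univ, true_and, Finset.notMem_empty, iff_false]
        rintro ⟨i, hi, -⟩
        omega
      rw [this, Finset.card_empty, hl1]
  · rw [if_neg hrng]
    have hnil : l = [] := fiberList_nil hf hrng (hL a)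
    have : univ.filter (fun w : H.V => MidVertexOf H l w) = ∅ := by
      ext w
      simp only [Finset.mem_filter, Finset.mem_univ, true_and, Finset.notMem_empty, iff_false]
      rintro ⟨i, hi, -⟩
      rw [hnil] at hi
      simp at hi
    rw [this, Finset.card_empty, hnil]
    rfl

open Finset in
lemma col_count (hG : G.Connected) (hf : IsGraphMap f) (hact : IsActive f)
    (L : ∀ a : G.A, List H.A) (hL : ∀ a, FiberList f a (L a)) (w : H.V) :
    (univ.filter (fun a : G.A => MidVertexOf H (L a) w)).card
      = if (∀ v : G.V, f.fv (some v) ≠ some w) then 2 else 0 := by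
  classical
  split_ifs with hNI
  · obtain ⟨hbiv, a₀, hOn, huni⟩ := hf.2.2.2.2 w hNI
    have hset : univ.filter (fun a : G.A => MidVertexOf H (L a) w) = {a₀, G.dag a₀} := by
      ext a
      simp only [Finset.mem_filter, Finset.mem_univ, true_and, Finset.mem_insert,
        Finset.mem_singleton]
      constructor
      · intro hm
        exact huni a ((onFiberPath_iff_mid hG hf hact L hL).mpr hm)
      · rintro (rfl | rfl)
        · exact (onFiberPath_iff_mid hG hf hact L hL).mp hOn
        · exact (onFiberPath_iff_mid hG hf hact L hL).mp (onFiberPath_dag hf hOn)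
    rw [hset, Finset.card_pair (Ne.symm (G.dag_ne a₀))]
  · have : univ.filter (fun a : G.A => MidVertexOf H (L a) w) = ∅ := by
      ext a
      simp only [Finset.mem_filter, Finset.mem_univ, true_and, Finset.notMem_empty, iff_false]
      rintro ⟨i, hi, hw⟩
      exact hNI (mid_not_image hG hf hact (hL a) hi hw)
    rw [this, Finset.card_empty]

end MapC

end CGraph


namespace CGraph

section MapZ

open scoped Classical

open Finset

variable {G H : CGraph} {f : PreMap G H}

lemma NI_count (hG : G.Connected) (hf : IsGraphMap f) (hact : IsActive f)
    (L : ∀ a : G.A, List H.A) (hL : ∀ a, FiberList f a (L a)) :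
    2 * (univ.filter fun w : H.V => ∀ v : G.V, f.fv (some v) ≠ some w).card
      + (univ.filter (fun a : G.A => a ∈ Set.range f.fa)).card
      = ∑ a : G.A, (L a).length := by
  have hRsum : (∑ a : G.A, (univ.filter (fun w : H.V => MidVertexOf H (L a) w)).card)
      + (univ.filter (fun a : G.A => a ∈ Set.range f.fa)).card
      = ∑ a : G.A, (L a).length := by
    have hR : (univ.filter (fun a : G.A => a ∈ Set.range f.fa)).card
        = ∑ a : G.A, (if a ∈ Set.range f.fa then 1 else 0) := Finset.card_filter _ _
    rw [hR, ← Finset.sum_add_distrib]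
    exact Finset.sum_congr rfl fun a _ => row_count hact hf L hL a
  have hswap : (∑ a : G.A, (univ.filter fun w : H.V => MidVertexOf H (L a) w).card)
      = ∑ w : H.V, (univ.filter fun a : G.A => MidVertexOf H (L a) w).card := by
    simp_rw [Finset.card_filter]
    exact Finset.sum_comm
  have hcol : (∑ w : H.V, (univ.filter fun a : G.A => MidVertexOf H (L a) w).card)
      = 2 * (univ.filter fun w : H.V => ∀ v : G.V, f.fv (some v) ≠ some w).card := by
    rw [Finset.card_filter, Finset.mul_sum]
    apply Finset.sum_congr rfl
    intro w _
    rw [col_count hG hf hact L hL w]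
    split_ifs <;> simp
  omega

lemma HV_split :
    (univ.filter fun w : H.V => ∀ v : G.V, f.fv (some v) ≠ some w).card
      + (univ.filter fun w : H.V => ¬ ∀ v : G.V, f.fv (some v) ≠ some w).card
      = Fintype.card H.V := by
  rw [Finset.card_filter_add_card_filter_not, Finset.card_univ]

lemma Csum_eq (hf : IsGraphMap f) (hact : IsActive f) :
    (∑ w : H.V, Nat.card (Quot (fiber f w).Touch))
      = (univ.filter fun w : H.V => ¬ ∀ v : G.V, f.fv (some v) ≠ some w).card := by
  rw [Finset.card_filter]
  apply Finset.sum_congr rfl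
  intro w _
  by_cases h : ∀ v : G.V, f.fv (some v) ≠ some w
  · rw [fiber_quot_card_not_image h, if_neg (not_not_intro h)]
  · rw [if_pos h]
    push_neg at h
    obtain ⟨v, hv⟩ := h
    exact fiber_quot_card_image hf hact ⟨v, hv⟩

end MapZ

end CGraph

/-!
STATEMENT 14: If `f : Γ → Λ` is an active combinatorial graph map between connected
graphs, then `b₁(Γ) = b₁(Λ) + Σ_{w ∈ V_Λ} b₁(f⁻¹(w))`, where `b₁` of a graph is its
number of edges minus its number of vertices plus its number of connected components
(so `b₁` of a connected graph is `#edges − #vertices + 1`, `b₁` of a fiber is computed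
with one summand per connected component, and `b₁` of the empty graph is `0`).
-/

open CGraph in
theorem active_b1_additivity (G H : CGraph) (hG : G.Connected) (hH : H.Connected)
    (f : PreMap G H) (hf : IsGraphMap f) (hact : IsActive f) :
    b1 G = b1 H + ∑ w : H.V, b1 (fiber f w) := by
  classical
  choose L hL using hf.2.2.1
  have hb1G : b1 G + Fintype.card G.V = Fintype.card G.A / 2 + 1 := by
    have h1 := vertices_le G
    rw [connected_quot_card G hG] at h1
    unfold b1
    rw [connected_quot_card G hG]
    omega
  have hb1H : b1 H + Fintype.card H.V = Fintype.card H.A / 2 + 1 := by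
    have h1 := vertices_le H
    rw [connected_quot_card H hH] at h1
    unfold b1
    rw [connected_quot_card H hH]
    omega
  have hC1 := card_V_eq (f := f) hact
  have hC2 := card_A_eq hG hH hf hact
  have hC3 := card_HA_eq L hL
  have hNI := NI_count hG hf hact L hL
  have hHVs := HV_split (G := G) (H := H) (f := f)
  have hCsum := Csum_eq hf hact
  have he1 : (∑ w : H.V, Fintype.card {v : G.V // f.fv (some v) = some w})
      = ∑ w : H.V, Fintype.card (fiber f w).V :=
    Finset.sum_congr rfl fun w _ => Fintype.card_congr (Equiv.refl _)
  have he2 : (∑ w : H.V, Fintype.card {c : G.A // FiberArc f w c})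
      = ∑ w : H.V, Fintype.card (fiber f w).A :=
    Finset.sum_congr rfl fun w _ => Fintype.card_congr (Equiv.refl _)
  have hfib : (∑ w : H.V, b1 (fiber f w)) + (∑ w : H.V, Fintype.card (fiber f w).V)
      = (∑ w : H.V, Fintype.card (fiber f w).A / 2)
        + (∑ w : H.V, Nat.card (Quot (fiber f w).Touch)) := by
    rw [← Finset.sum_add_distrib, ← Finset.sum_add_distrib]
    apply Finset.sum_congr rfl
    intro w _
    have h1 := vertices_le (fiber f w)
    unfold b1
    omega
  have hfibeven : (∑ w : H.V, Fintype.card (fiber f w).A)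
      = 2 * ∑ w : H.V, (Fintype.card (fiber f w).A / 2) := by
    rw [Finset.mul_sum]
    apply Finset.sum_congr rfl
    intro w _
    have := arcs_even (fiber f w)
    omega
  have hevenG := arcs_even G
  have hevenH := arcs_even H
  omega
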